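/- Let ℓ ≥ 1 and let ν be an ℓ-core. Then for every i ∈ ℤ/ℓℤ, ν does not simultaneously have an i-addable box and an i-removable box. -/

import Mathlib

namespace CM

/-- The `∞`-residue of a box. -/
def rsd (c : ℕ × ℕ) : ℤ := (c.2 : ℤ) - (c.1 : ℤ)

/-- The `ℓ`-residue of a box. -/
def res (ℓ : ℕ) (c : ℕ × ℕ) : ZMod ℓ := (rsd c : ZMod ℓ)

/-- `Res_ℓ(μ) ∈ ℤ^(ℤ/ℓℤ)`: the number of boxes of each `ℓ`-residue. -/
def Res (ℓ : ℕ) (μ : YoungDiagram) : ZMod ℓ → ℤ := fun i =>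
  ((μ.cells.filter (fun c => res ℓ c = i)).card : ℤ)

/-- The constant vector `δ_ℓ = (1,…,1)`. -/
def delta (ℓ : ℕ) : ZMod ℓ → ℤ := fun _ => 1

/-- A box is removable if deleting it leaves a Young diagram. -/
def IsRemovable (μ : YoungDiagram) (c : ℕ × ℕ) : Prop :=
  c ∈ μ.cells ∧ ∃ ν : YoungDiagram, ν.cells = μ.cells.erase c

/-- A box is addable if adjoining it yields a Young diagram. -/
def IsAddable (μ : YoungDiagram) (c : ℕ × ℕ) : Prop :=
  c ∉ μ.cells ∧ ∃ ν : YoungDiagram, ν.cells = insert c μ.cells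

/-- One step: delete one removable box. -/
def RemoveStep (μ ν : YoungDiagram) : Prop :=
  ∃ c, IsRemovable μ c ∧ ν.cells = μ.cells.erase c

/-- `ν` is obtainable from `μ` by successively deleting removable boxes. -/
def Obtainable (μ ν : YoungDiagram) : Prop :=
  Relation.ReflTransGen RemoveStep μ ν

/-- `λ` is an `ℓ`-core: no partition obtainable from `λ` by deleting removable boxes
differs from `λ` by exactly `ℓ` boxes of pairwise distinct `ℓ`-residues. -/
def IsCore (ℓ : ℕ) (lam : YoungDiagram) : Prop :=
  ¬ ∃ μ : YoungDiagram, Obtainable lam μ ∧ (lam.cells \ μ.cells).card = ℓ ∧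
      Set.InjOn (res ℓ) ↑(lam.cells \ μ.cells)

/-- One step of the `ℓ`-core process: delete (via removable-box deletions) `ℓ` boxes
of pairwise distinct `ℓ`-residues. -/
def CoreStep (ℓ : ℕ) (μ ν : YoungDiagram) : Prop :=
  Obtainable μ ν ∧ (μ.cells \ ν.cells).card = ℓ ∧
    Set.InjOn (res ℓ) ↑(μ.cells \ ν.cells)

/-- `ν` is the `ℓ`-core of `λ`: it is an `ℓ`-core reached from `λ` by the core process. -/
def ReachesCore (ℓ : ℕ) (lam ν : YoungDiagram) : Prop :=
  Relation.ReflTransGen (CoreStep ℓ) lam ν ∧ IsCore ℓ ν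

-- ## auxiliary

def bfun (ν : YoungDiagram) (r : ℕ) : ℤ := (ν.rowLen r : ℤ) - 1 - r

def Bd (ν : YoungDiagram) (d : ℤ) : Prop := ∃ r, bfun ν r = d

lemma bfun_strictAnti (ν : YoungDiagram) : StrictAnti (bfun ν) :=
  strictAnti_nat_of_succ_lt fun n => by
    have := ν.rowLen_anti n (n + 1) (by omega)
    unfold bfun; push_cast; omega

lemma lower_cells {ν : YoungDiagram} {a b : ℕ × ℕ} (h : b ≤ a) (ha : a ∈ ν.cells) :
    b ∈ ν.cells := Finset.mem_coe.mp (ν.isLowerSet h (Finset.mem_coe.mpr ha))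

lemma mem_cells_iff {ν : YoungDiagram} {r s : ℕ} : (r, s) ∈ ν.cells ↔ s < ν.rowLen r := by
  rw [YoungDiagram.mem_cells, YoungDiagram.mem_iff_lt_rowLen]

lemma obtainable_subset {μ ν : YoungDiagram} (h : Obtainable μ ν) : ν.cells ⊆ μ.cells := by
  induction h with
  | refl => exact fun x hx => hx
  | tail _ hstep ih =>
    obtain ⟨c, _, hcells⟩ := hstep
    intro x hx
    rw [hcells] at hx
    exact ih (Finset.erase_subset _ _ hx)

lemma removable_bd {ν : YoungDiagram} {c : ℕ × ℕ} (h : IsRemovable ν c) :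
    Bd ν (rsd c) ∧ ¬ Bd ν (rsd c - 1) := by
  obtain ⟨hmem, ν', hcells⟩ := h
  obtain ⟨r, s⟩ := c
  have hrsd : rsd (r, s) = (s : ℤ) - r := rfl
  rw [mem_cells_iff] at hmem
  have h1 : ¬ (r, s + 1) ∈ ν.cells := by
    intro hc
    have hc' : (r, s + 1) ∈ ν'.cells := by
      rw [hcells, Finset.mem_erase]
      exact ⟨by simp, hc⟩
    have : (r, s) ∈ ν'.cells := lower_cells (by simp) hc'
    rw [hcells, Finset.mem_erase] at this
    exact this.1 rfl
  have h2 : ¬ (r + 1, s) ∈ ν.cells := by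
    intro hc
    have hc' : (r + 1, s) ∈ ν'.cells := by
      rw [hcells, Finset.mem_erase]
      exact ⟨by simp, hc⟩
    have : (r, s) ∈ ν'.cells := lower_cells (by simp) hc'
    rw [hcells, Finset.mem_erase] at this
    exact this.1 rfl
  rw [mem_cells_iff] at h1 h2
  have hrow : ν.rowLen r = s + 1 := by omega
  have hrow2 : ν.rowLen (r + 1) ≤ s := by omega
  have hb : bfun ν r = (s : ℤ) - r := by unfold bfun; rw [hrow]; push_cast; ring
  rw [hrsd]
  refine ⟨⟨r, hb⟩, ?_⟩
  rintro ⟨j, hj⟩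
  have hjr : r < j := by
    have : bfun ν j < bfun ν r := by rw [hb, hj]; omega
    exact (bfun_strictAnti ν).lt_iff_gt.mp this
  have hle : bfun ν j ≤ bfun ν (r + 1) := (bfun_strictAnti ν).antitone (by omega)
  have hcast : (ν.rowLen (r + 1) : ℤ) ≤ (s : ℤ) := by exact_mod_cast hrow2
  have : bfun ν (r + 1) ≤ (s : ℤ) - r - 2 := by unfold bfun; push_cast; omega
  omega

lemma addable_bd {ν : YoungDiagram} {c : ℕ × ℕ} (h : IsAddable ν c) :
    ¬ Bd ν (rsd c) ∧ Bd ν (rsd c - 1) := by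
  obtain ⟨hmem, ν', hcells⟩ := h
  obtain ⟨r, s⟩ := c
  have hrsd : rsd (r, s) = (s : ℤ) - r := rfl
  rw [mem_cells_iff] at hmem
  have hself : (r, s) ∈ ν'.cells := by rw [hcells]; exact Finset.mem_insert_self _ _
  have hsub : ∀ t, t < s → (r, t) ∈ ν.cells := by
    intro t ht
    have : (r, t) ∈ ν'.cells := lower_cells (by simp; omega) hself
    rw [hcells, Finset.mem_insert] at this
    rcases this with h' | h'
    · exfalso; have := congrArg Prod.snd h'; simp at this; omega
    · exact h'
  have hrow : ν.rowLen r = s := by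
    rcases Nat.lt_trichotomy (ν.rowLen r) s with hlt | he | hlt
    · have := hsub (ν.rowLen r) hlt
      rw [mem_cells_iff] at this; omega
    · exact he
    · omega
  have hb : bfun ν r = (s : ℤ) - r - 1 := by unfold bfun; rw [hrow]; push_cast; ring
  rw [hrsd]
  refine ⟨?_, ⟨r, hb⟩⟩
  rintro ⟨j, hj⟩
  have hjr : j < r := by
    have : bfun ν r < bfun ν j := by rw [hb, hj]; omega
    exact (bfun_strictAnti ν).lt_iff_gt.mp this
  have hr0 : 1 ≤ r := by omega
  have hup : (r - 1, s) ∈ ν.cells := by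
    have : (r - 1, s) ∈ ν'.cells := lower_cells (by simp) hself
    rw [hcells, Finset.mem_insert] at this
    rcases this with h' | h'
    · exfalso; have := congrArg Prod.fst h'; simp at this; omega
    · exact h'
  rw [mem_cells_iff] at hup
  have hle : bfun ν j ≥ bfun ν (r - 1) := by
    by_cases hjr1 : j = r - 1
    · rw [hjr1]
    · exact le_of_lt ((bfun_strictAnti ν) (by omega))
  have hcast : (s : ℤ) + 1 ≤ (ν.rowLen (r - 1) : ℤ) := by exact_mod_cast hup
  have hcast2 : ((r - 1 : ℕ) : ℤ) = (r : ℤ) - 1 := by omega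
  have : (s : ℤ) - r + 1 ≤ bfun ν (r - 1) := by unfold bfun; rw [hcast2]; omega
  omega


lemma step {ν : YoungDiagram} {p : ℤ} (hp : Bd ν p) (hp1 : ¬ Bd ν (p - 1)) :
    ∃ (c : ℕ × ℕ) (ν' : YoungDiagram), IsRemovable ν c ∧
      ν'.cells = ν.cells.erase c ∧ rsd c = p ∧
      ∀ e, Bd ν' e ↔ ((Bd ν e ∧ e ≠ p) ∨ e = p - 1) := by
  obtain ⟨r, hr⟩ := hp
  -- row r is nonempty
  have hpos : 1 ≤ ν.rowLen r := by
    by_contra hc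
    have h0 : ν.rowLen r = 0 := by omega
    have h0' : ν.rowLen (r + 1) = 0 :=
      Nat.le_zero.mp (h0 ▸ ν.rowLen_anti r (r + 1) (by omega))
    apply hp1
    refine ⟨r + 1, ?_⟩
    unfold bfun at hr ⊢
    rw [h0'] ; rw [h0] at hr ; push_cast ; push_cast at hr ; omega
  -- next row is strictly shorter
  have hless : ν.rowLen (r + 1) < ν.rowLen r := by
    rcases Nat.lt_or_ge (ν.rowLen (r + 1)) (ν.rowLen r) with h | h
    · exact h
    · exfalso
      have he : ν.rowLen (r + 1) = ν.rowLen r := le_antisymm (ν.rowLen_anti r (r+1) (by omega)) h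
      apply hp1
      refine ⟨r + 1, ?_⟩
      unfold bfun at hr ⊢
      rw [he]; push_cast; push_cast at hr; omega
  set c : ℕ × ℕ := (r, ν.rowLen r - 1) with hc
  have hcmem : c ∈ ν.cells := by rw [hc, mem_cells_iff]; omega
  -- erased set is a lower set
  have hlower : IsLowerSet (↑(ν.cells.erase c) : Set (ℕ × ℕ)) := by
    intro a b hba ha
    simp only [Finset.coe_erase, Set.mem_diff, Finset.mem_coe, Set.mem_singleton_iff] at ha ⊢
    obtain ⟨ha, hane⟩ := ha
    refine ⟨lower_cells hba ha, ?_⟩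
    rintro rfl
    -- b = c ≤ a, a ∈ ν, a ≠ c : contradiction
    obtain ⟨a1, a2⟩ := a
    obtain ⟨hb1, hb2⟩ := hba
    simp only [hc] at hb1 hb2 ⊢
    rw [mem_cells_iff] at ha
    have h1 : ν.rowLen a1 ≤ ν.rowLen r := ν.rowLen_anti r a1 hb1
    have ha1 : a1 = r := by
      by_contra hne
      have : ν.rowLen a1 ≤ ν.rowLen (r + 1) := ν.rowLen_anti (r+1) a1 (by omega)
      omega
    apply hane
    simp only [ha1] at ha ⊢
    have : a2 = ν.rowLen r - 1 := by omega
    rw [this]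
  set ν' : YoungDiagram := ⟨ν.cells.erase c, hlower⟩ with hν'
  have hcells : ν'.cells = ν.cells.erase c := rfl
  have hmem' : ∀ a : ℕ × ℕ, a ∈ ν'.cells ↔ a ∈ ν.cells ∧ a ≠ c := by
    intro a; rw [hcells, Finset.mem_erase]; tauto
  -- rowLen of ν'
  have hrow' : ∀ j, ν'.rowLen j = if j = r then ν.rowLen r - 1 else ν.rowLen j := by
    intro j
    split_ifs with hj
    · subst hj
      have hub : ¬ (j, ν.rowLen j - 1) ∈ ν'.cells := by
        rw [hmem']; simp [hc]
      have hlb : ∀ t, t < ν.rowLen j - 1 → (j, t) ∈ ν'.cells := by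
        intro t ht
        rw [hmem', mem_cells_iff]
        constructor
        · omega
        · intro he; rw [hc] at he; have := congrArg Prod.snd he; simp at this; omega
      rw [mem_cells_iff] at hub
      rcases Nat.lt_trichotomy (ν'.rowLen j) (ν.rowLen j - 1) with h | h | h
      · have := hlb _ h
        rw [mem_cells_iff] at this; omega
      · exact h
      · omega
    · have : ∀ t, (j, t) ∈ ν'.cells ↔ (j, t) ∈ ν.cells := by
        intro t
        rw [hmem']
        constructor
        · tauto
        · intro h'
          refine ⟨h', ?_⟩
          intro he; rw [hc] at he; have := congrArg Prod.fst he; simp at this; omega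
      rcases Nat.lt_trichotomy (ν'.rowLen j) (ν.rowLen j) with h | h | h
      · exfalso
        have h2 : (j, ν'.rowLen j) ∈ ν.cells := mem_cells_iff.mpr h
        rw [← this] at h2
        rw [mem_cells_iff] at h2; omega
      · exact h
      · exfalso
        have h2 : (j, ν.rowLen j) ∈ ν'.cells := by
          rw [mem_cells_iff]; omega
        rw [this, mem_cells_iff] at h2; omega
  have hbfun' : ∀ j, bfun ν' j = if j = r then p - 1 else bfun ν j := by
    intro j
    unfold bfun
    rw [hrow']
    split_ifs with hj
    · subst hj
      unfold bfun at hr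
      have : ((ν.rowLen j - 1 : ℕ) : ℤ) = (ν.rowLen j : ℤ) - 1 := by omega
      rw [this]; omega
    · rfl
  refine ⟨c, ν', ⟨hcmem, ⟨ν', hcells⟩⟩, hcells, ?_, ?_⟩
  · rw [hc]
    unfold rsd bfun at *
    simp only
    have : ((ν.rowLen r - 1 : ℕ) : ℤ) = (ν.rowLen r : ℤ) - 1 := by omega
    rw [this]; omega
  · intro e
    constructor
    · rintro ⟨j, hj⟩
      rw [hbfun'] at hj
      split_ifs at hj with hjr
      · right; omega
      · left
        refine ⟨⟨j, hj⟩, ?_⟩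
        rintro rfl
        exact hjr ((bfun_strictAnti ν).injective (hj.trans hr.symm) : j = r)
    · rintro (⟨⟨j, hj⟩, hne⟩ | rfl)
      · refine ⟨j, ?_⟩
        rw [hbfun']
        split_ifs with hjr
        · subst hjr; exfalso; exact hne (hj ▸ hr ▸ rfl)
        · exact hj
      · exact ⟨r, by rw [hbfun']; simp⟩


lemma diff_insert_of_step {ν ν' μ : YoungDiagram} {c : ℕ × ℕ}
    (hc : c ∈ ν.cells) (hcells : ν'.cells = ν.cells.erase c) (hsub : μ.cells ⊆ ν'.cells) :
    ν.cells \ μ.cells = insert c (ν'.cells \ μ.cells) := by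
  have hcnot : c ∉ μ.cells := by
    intro h
    have := hsub h
    rw [hcells, Finset.mem_erase] at this
    exact this.1 rfl
  ext x
  simp only [Finset.mem_sdiff, Finset.mem_insert, hcells, Finset.mem_erase]
  constructor
  · rintro ⟨h1, h2⟩
    by_cases hx : x = c
    · exact Or.inl hx
    · exact Or.inr ⟨⟨hx, h1⟩, h2⟩
  · rintro (rfl | ⟨⟨_, h1⟩, h2⟩)
    · exact ⟨hc, hcnot⟩
    · exact ⟨h1, h2⟩

lemma insert_Icc_coe {d : ℤ} {n : ℕ} :
    insert d (↑(Finset.Icc (d - 1 - n) (d - 1)) : Set ℤ) = ↑(Finset.Icc (d - (n + 1)) d) := by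
  ext x
  simp only [Set.mem_insert_iff, Finset.coe_Icc, Set.mem_Icc]
  omega

lemma rim : ∀ (n : ℕ) (ν : YoungDiagram) (d : ℤ), Bd ν d → ¬ Bd ν (d - (n + 1)) →
    ∃ μ : YoungDiagram, Obtainable ν μ ∧
      Set.BijOn rsd (↑(ν.cells \ μ.cells) : Set (ℕ × ℕ)) (↑(Finset.Icc (d - n) d) : Set ℤ) ∧
      ∀ e, Bd μ e ↔ ((Bd ν e ∧ e ≠ d) ∨ e = d - (n + 1)) := by
  intro n
  induction n with
  | zero =>
    intro ν d hd hnd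
    obtain ⟨c, ν', hrem, hcells, hrsd, hBd⟩ := step hd (by rw [show d - 1 = d - (((0 : ℕ) : ℤ) + 1) from by push_cast; ring]; exact hnd)
    refine ⟨ν', Relation.ReflTransGen.single ⟨c, hrem, hcells⟩, ?_, ?_⟩
    · have hdiff : ν.cells \ ν'.cells = {c} := by
        ext x
        simp only [Finset.mem_sdiff, hcells, Finset.mem_erase, Finset.mem_singleton]
        constructor
        · rintro ⟨h1, h2⟩; by_contra hne; exact h2 ⟨hne, h1⟩
        · rintro rfl; exact ⟨hrem.1, fun h => h.1 rfl⟩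
      rw [hdiff]
      have : Finset.Icc (d - (0 : ℕ)) d = {d} := by
        push_cast; rw [sub_zero, Finset.Icc_self]
      rw [this]
      simp only [Finset.coe_singleton]
      rw [Set.bijOn_singleton]
      exact hrsd
    · intro e
      rw [hBd e]
      constructor
      · rintro (h | rfl)
        · exact Or.inl h
        · right; push_cast; ring_nf
      · rintro (h | rfl)
        · exact Or.inl h
        · right; push_cast; ring_nf
  | succ n ih =>
    intro ν d hd hnd
    have harith : ((n : ℤ) + 1 + 1) = ((n + 1 : ℕ) : ℤ) + 1 := by push_cast; ring
    by_cases h1 : Bd ν (d - 1)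
    · -- remove the lower part first, then the box on diagonal d
      obtain ⟨μ', hobt', hbij', hBd'⟩ := ih ν (d - 1) h1
        (by rw [show d - 1 - ((n : ℤ) + 1) = d - (((n + 1 : ℕ) : ℤ) + 1) from by push_cast; ring]
            exact hnd)
      have hBdd : Bd μ' d := by
        rw [hBd' d]; exact Or.inl ⟨hd, by omega⟩
      have hBdd1 : ¬ Bd μ' (d - 1) := by
        rw [hBd' (d - 1)]
        rintro (⟨_, hne⟩ | he)
        · exact hne rfl
        · omega
      obtain ⟨c, μ, hrem, hcells, hrsd, hBd⟩ := step hBdd hBdd1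
      have hsub : μ.cells ⊆ μ'.cells := by rw [hcells]; exact Finset.erase_subset _ _
      have hsub' : μ'.cells ⊆ ν.cells := obtainable_subset hobt'
      refine ⟨μ, hobt'.tail ⟨c, hrem, hcells⟩, ?_, ?_⟩
      · have hdiff : ν.cells \ μ.cells = insert c (ν.cells \ μ'.cells) := by
          have hcν : c ∈ ν.cells := hsub' hrem.1
          ext x
          simp only [Finset.mem_sdiff, Finset.mem_insert, hcells, Finset.mem_erase]
          constructor
          · rintro ⟨hx1, hx2⟩
            by_cases hx : x = c
            · exact Or.inl hx
            · right
              refine ⟨hx1, fun hm => hx2 ⟨hx, hm⟩⟩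
          · rintro (rfl | ⟨hx1, hx2⟩)
            · exact ⟨hcν, fun h => h.1 rfl⟩
            · exact ⟨hx1, fun h => hx2 h.2⟩
        rw [hdiff, Finset.coe_insert]
        have hnotin : rsd c ∉ (↑(Finset.Icc (d - 1 - n) (d - 1)) : Set ℤ) := by
          rw [hrsd]; simp only [Finset.coe_Icc, Set.mem_Icc]; omega
        have := hbij'.insert hnotin
        rw [hrsd] at this
        rwa [insert_Icc_coe] at this
      · intro e
        rw [hBd e]
        constructor
        · rintro (⟨hm, hne⟩ | rfl)
          · rw [hBd' e] at hm
            rcases hm with ⟨hm, hne1⟩ | rfl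
            · exact Or.inl ⟨hm, hne⟩
            · right; omega
          · exact Or.inl ⟨h1, by omega⟩
        · rintro (⟨hm, hne⟩ | rfl)
          · by_cases he : e = d - 1
            · exact Or.inr he
            · exact Or.inl ⟨(hBd' e).mpr (Or.inl ⟨hm, he⟩), hne⟩
          · left
            refine ⟨(hBd' _).mpr (Or.inr (by omega)), by omega⟩
    · -- remove the box on diagonal d first
      obtain ⟨c, ν', hrem, hcells, hrsd, hBd1⟩ := step hd h1
      have hBd'd : Bd ν' (d - 1) := (hBd1 _).mpr (Or.inr rfl)
      have hnd' : ¬ Bd ν' (d - 1 - ((n : ℤ) + 1)) := by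
        rw [hBd1]
        rintro (⟨hm, _⟩ | he)
        · apply hnd
          rwa [show d - 1 - ((n : ℤ) + 1) = d - (((n + 1 : ℕ) : ℤ) + 1) from by push_cast; ring] at hm
        · omega
      obtain ⟨μ, hobt', hbij', hBd'⟩ := ih ν' (d - 1) hBd'd hnd'
      have hsub : μ.cells ⊆ ν'.cells := obtainable_subset hobt'
      refine ⟨μ, Relation.ReflTransGen.head ⟨c, hrem, hcells⟩ hobt', ?_, ?_⟩
      · rw [diff_insert_of_step hrem.1 hcells hsub, Finset.coe_insert]
        have hnotin : rsd c ∉ (↑(Finset.Icc (d - 1 - n) (d - 1)) : Set ℤ) := by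
          rw [hrsd]; simp only [Finset.coe_Icc, Set.mem_Icc]; omega
        have := hbij'.insert hnotin
        rw [hrsd] at this
        rwa [insert_Icc_coe] at this
      · intro e
        rw [hBd' e, hBd1 e]
        constructor
        · rintro (⟨hm | rfl, hne⟩ | rfl)
          · exact Or.inl hm
          · exact absurd rfl hne
          · right; omega
        · rintro (⟨hm, hne⟩ | rfl)
          · have : e ≠ d - 1 := by rintro rfl; exact h1 hm
            exact Or.inl ⟨Or.inl ⟨hm, hne⟩, this⟩
          · right; omega

lemma descend (ℓ : ℕ) : ∀ (k : ℕ) (ν : YoungDiagram) (x y : ℤ), Bd ν x → ¬ Bd ν y →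
    x - y = (ℓ : ℤ) * k → ∃ d, Bd ν d ∧ ¬ Bd ν (d - ℓ) := by
  intro k
  induction k with
  | zero =>
    intro ν x y hx hy hxy
    exfalso
    apply hy
    have : x = y := by push_cast at hxy; omega
    rwa [this] at hx
  | succ k ih =>
    intro ν x y hx hy hxy
    by_cases h : Bd ν (x - ℓ)
    · refine ih ν (x - ℓ) y h hy ?_
      push_cast at hxy ⊢
      linarith
    · exact ⟨x, hx, h⟩

lemma res_dvd {ℓ : ℕ} {c₁ c₂ : ℕ × ℕ} (h : res ℓ c₁ = res ℓ c₂) :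
    (ℓ : ℤ) ∣ rsd c₁ - rsd c₂ := by
  rw [← ZMod.intCast_zmod_eq_zero_iff_dvd]
  push_cast
  rw [sub_eq_zero]
  exact h


/-- An `ℓ`-core never has simultaneously an `i`-addable box and an
`i`-removable box. -/
theorem core_no_addable_and_removable (ℓ : ℕ) [NeZero ℓ] (ν : YoungDiagram)
    (hν : IsCore ℓ ν) (i : ZMod ℓ) :
    ¬ ((∃ b, IsAddable ν b ∧ res ℓ b = i) ∧ (∃ b, IsRemovable ν b ∧ res ℓ b = i)) := by
  rintro ⟨⟨a, ha, hra⟩, ⟨b, hb, hrb⟩⟩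
  obtain ⟨hA1, hA2⟩ := addable_bd ha
  obtain ⟨hR1, hR2⟩ := removable_bd hb
  have hdvd : (ℓ : ℤ) ∣ rsd a - rsd b := res_dvd (hra.trans hrb.symm)
  obtain ⟨t, ht⟩ := hdvd
  have hℓ : ℓ ≠ 0 := NeZero.ne ℓ
  -- find d with Bd ν d and ¬ Bd ν (d - ℓ)
  have hkey : ∃ d, Bd ν d ∧ ¬ Bd ν (d - ℓ) := by
    rcases lt_trichotomy t 0 with hts | hts | hts
    · refine descend ℓ (-t).toNat ν (rsd b) (rsd a) hR1 hA1 ?_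
      have : ((-t).toNat : ℤ) = -t := Int.toNat_of_nonneg (by omega)
      rw [this]
      linarith
    · exfalso
      apply hA1
      have : rsd a = rsd b := by rw [hts, mul_zero] at ht; omega
      rwa [this]
    · refine descend ℓ t.toNat ν (rsd a - 1) (rsd b - 1) hA2 hR2 ?_
      have : (t.toNat : ℤ) = t := Int.toNat_of_nonneg (by omega)
      rw [this]
      linarith
  obtain ⟨d, hd, hnd⟩ := hkey
  obtain ⟨m, rfl⟩ : ∃ m, ℓ = m + 1 := ⟨ℓ - 1, by omega⟩
  obtain ⟨μ, hobt, hbij, -⟩ := rim m ν d hd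
    (by rwa [show d - (((m : ℕ) : ℤ) + 1) = d - ((m + 1 : ℕ) : ℤ) from by push_cast; ring])
  apply hν
  refine ⟨μ, hobt, ?_, ?_⟩
  · -- cardinality
    have h1 : (rsd '' (↑(ν.cells \ μ.cells) : Set (ℕ × ℕ))).ncard
        = (↑(ν.cells \ μ.cells) : Set (ℕ × ℕ)).ncard := Set.ncard_image_of_injOn hbij.injOn
    rw [hbij.image_eq] at h1
    rw [Set.ncard_coe_finset, Set.ncard_coe_finset] at h1
    rw [← h1, Int.card_Icc]
    omega
  · -- injectivity of residues
    intro c₁ h₁ c₂ h₂ heq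
    have hm₁ := hbij.mapsTo h₁
    have hm₂ := hbij.mapsTo h₂
    simp only [Finset.coe_Icc, Set.mem_Icc] at hm₁ hm₂
    have hdvd' : ((m + 1 : ℕ) : ℤ) ∣ rsd c₁ - rsd c₂ := res_dvd heq
    have habs : |rsd c₁ - rsd c₂| < ((m + 1 : ℕ) : ℤ) := by
      rw [abs_lt]
      push_cast
      omega
    have h0 : rsd c₁ - rsd c₂ = 0 := Int.eq_zero_of_abs_lt_dvd hdvd' habs
    exact hbij.injOn h₁ h₂ (by omega)


end CM
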